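/- Let K be a commutative domain, a and b nonzero integers, and χ(X) = (X - v_1)⋯(X - v_r) a monic polynomial with roots v_1, ..., v_r that are units of K and with v_i - v_j a unit whenever i ≠ j. Then the following are equivalent: (1) there exists a polynomial T ∈ K[X] such that T(X)^a ≡ X^b modulo χ(X) in the localization K[X, X^{-1}]; (2) for each i, the element v_i^b admits an a-th root in K. -/

import Mathlib

open Polynomial

set_option linter.unusedVariables false

noncomputable def laurentEval {K : Type*} [CommRing K] (c : Kˣ) :
    LaurentPolynomial K →ₐ[K] K :=
  AddMonoidAlgebra.lift K K ℤ ((Units.coeHom K).comp (zpowersHom Kˣ c))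

lemma laurentEval_T {K : Type*} [CommRing K] (c : Kˣ) (n : ℤ) :
    laurentEval c (LaurentPolynomial.T n) = ((c ^ n : Kˣ) : K) := by
  rw [laurentEval, LaurentPolynomial.T, AddMonoidAlgebra.lift_single]
  simp only [MonoidHom.comp_apply, Units.coeHom_apply, one_smul]
  norm_num [zpowersHom_apply]

lemma laurentEval_C {K : Type*} [CommRing K] (c : Kˣ) (a : K) :
    laurentEval c (LaurentPolynomial.C a) = a := by
  rw [LaurentPolynomial.C_eq_algebraMap]
  exact (laurentEval c).commutes a

lemma laurentEval_toLaurent {K : Type*} [CommRing K] (c : Kˣ) (p : Polynomial K) :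
    laurentEval c (p.toLaurent) = p.eval (c : K) := by
  have h : ((laurentEval c : LaurentPolynomial K →ₐ[K] K) :
      LaurentPolynomial K →+* K).comp (Polynomial.toLaurent) =
      Polynomial.evalRingHom (c : K) := by
    apply Polynomial.ringHom_ext
    · intro a
      simp [Polynomial.toLaurent_C, laurentEval_C]
    · have := laurentEval_T c 1
      simp only [RingHom.comp_apply, Polynomial.toLaurent_X, coe_evalRingHom, eval_X]
      rw [show ((laurentEval c : LaurentPolynomial K →ₐ[K] K) :
        LaurentPolynomial K →+* K) (LaurentPolynomial.T 1) = laurentEval c (LaurentPolynomial.T 1) from rfl, this]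
      simp
  exact RingHom.congr_fun h p

lemma prod_dvd_of_eval_eq_zero {K : Type*} [CommRing K] [IsDomain K] {r : ℕ}
    (v : Fin r → K) (hinj : Function.Injective v)
    (p : Polynomial K) (h : ∀ i, p.eval (v i) = 0) :
    (∏ i, (Polynomial.X - Polynomial.C (v i))) ∣ p := by
  rcases eq_or_ne p 0 with rfl | hp
  · exact dvd_zero _
  have hle : (Finset.univ.val.map v) ≤ p.roots := by
    rw [Multiset.le_iff_subset ((Finset.univ.nodup.map hinj))]
    intro x hx
    obtain ⟨i, _, rfl⟩ := Multiset.mem_map.mp hx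
    exact (Polynomial.mem_roots hp).mpr (h i)
  have := (Multiset.prod_X_sub_C_dvd_iff_le_roots hp (Finset.univ.val.map v)).mpr hle
  rw [Multiset.map_map] at this
  simpa [Finset.prod] using this

lemma exists_interp {K : Type*} [CommRing K] {r : ℕ} (v : Fin r → K)
    (hdiff : ∀ i j : Fin r, i ≠ j → IsUnit (v i - v j)) (c : Fin r → K) :
    ∃ T : Polynomial K, ∀ i, T.eval (v i) = c i := by
  classical
  refine ⟨∑ i, Polynomial.C (c i * Ring.inverse (∏ j ∈ Finset.univ.erase i, (v i - v j))) *
      ∏ j ∈ Finset.univ.erase i, (Polynomial.X - Polynomial.C (v j)), fun k => ?_⟩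
  have hu : IsUnit (∏ j ∈ Finset.univ.erase k, (v k - v j)) :=
    Finset.prod_induction _ IsUnit (fun _ _ => IsUnit.mul) isUnit_one
      (fun j hj => hdiff k j fun h => (Finset.mem_erase.mp hj).1 h.symm)
  rw [Polynomial.eval_finset_sum, Finset.sum_eq_single k]
  · simp only [Polynomial.eval_mul, Polynomial.eval_C, Polynomial.eval_prod,
      Polynomial.eval_sub, Polynomial.eval_X]
    rw [mul_assoc, Ring.inverse_mul_cancel _ hu, mul_one]
  · intro i _ hik
    simp only [Polynomial.eval_mul, Polynomial.eval_prod, Polynomial.eval_sub, Polynomial.eval_X,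
      Polynomial.eval_C]
    have hz : (∏ x ∈ Finset.univ.erase i, (v k - v x)) = 0 :=
      Finset.prod_eq_zero (Finset.mem_erase.mpr ⟨hik.symm, Finset.mem_univ k⟩) (sub_self (v k))
    rw [hz, mul_zero]
  · intro hk; exact absurd (Finset.mem_univ k) hk

/-- Existence of `T ∈ K[X]` with `T(X)^a ≡ X^b mod χ(X)` in `K[X,X⁻¹]`
is equivalent to each `v i ^ b` admitting an `a`-th root in `K`,
for `χ = ∏ (X - v i)` square-free split with unit roots. -/
theorem stmt_2 {K : Type*} [CommRing K] [IsDomain K] {r : ℕ} (a b : ℤ)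
    (ha : a ≠ 0) (hb : b ≠ 0) (v : Fin r → K)
    (hv : ∀ i : Fin r, IsUnit (v i))
    (hdiff : ∀ i j : Fin r, i ≠ j → IsUnit (v i - v j))
    (χ : Polynomial K) (hχ : χ = ∏ i : Fin r, (X - C (v i))) :
    (∃ T : Polynomial K,
        ∃ u x : (LaurentPolynomial K ⧸ Ideal.span {Polynomial.toLaurent χ})ˣ,
          (u : LaurentPolynomial K ⧸ Ideal.span {Polynomial.toLaurent χ}) =
              Ideal.Quotient.mk (Ideal.span {Polynomial.toLaurent χ})
                (Polynomial.toLaurent T) ∧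
          (x : LaurentPolynomial K ⧸ Ideal.span {Polynomial.toLaurent χ}) =
              Ideal.Quotient.mk (Ideal.span {Polynomial.toLaurent χ})
                (Polynomial.toLaurent (X : Polynomial K)) ∧
          u ^ a = x ^ b) ↔
      (∀ i : Fin r, ∃ w : Kˣ, w ^ a = (hv i).unit ^ b) := by
  classical
  set I : Ideal (LaurentPolynomial K) := Ideal.span {Polynomial.toLaurent χ} with hI
  have hinj : Function.Injective v := by
    intro i j hij
    by_contra hne
    have h0 := hdiff i j hne
    rw [hij, sub_self] at h0
    exact not_isUnit_zero h0
  have hχ0 : ∀ i, χ.eval (v i) = 0 := by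
    intro i
    rw [hχ, Polynomial.eval_prod]
    exact Finset.prod_eq_zero (Finset.mem_univ i) (by simp)
  have hkill : ∀ i : Fin r, ∀ f ∈ I, (laurentEval (hv i).unit).toRingHom f = 0 := by
    intro i f hf
    obtain ⟨g, rfl⟩ := Ideal.mem_span_singleton'.mp hf
    show laurentEval (hv i).unit _ = 0
    rw [map_mul, laurentEval_toLaurent]
    rw [IsUnit.unit_spec, hχ0 i, mul_zero]
  let ε : Fin r → ((LaurentPolynomial K ⧸ I) →+* K) := fun i =>
    Ideal.Quotient.lift I (laurentEval (hv i).unit).toRingHom (hkill i)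
  have hε : ∀ i (f : LaurentPolynomial K),
      ε i (Ideal.Quotient.mk I f) = laurentEval (hv i).unit f := fun i f => rfl
  have hεT : ∀ i (p : Polynomial K),
      ε i (Ideal.Quotient.mk I (Polynomial.toLaurent p)) = p.eval (v i) := by
    intro i p
    rw [hε, laurentEval_toLaurent, IsUnit.unit_spec]
  have hεinj : ∀ q : (LaurentPolynomial K ⧸ I), (∀ i, ε i q = 0) → q = 0 := by
    intro q hq
    obtain ⟨f, rfl⟩ := Ideal.Quotient.mk_surjective q
    rw [Ideal.Quotient.eq_zero_iff_mem]
    obtain ⟨n, f', hf'⟩ := LaurentPolynomial.exists_T_pow f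
    have hroots : ∀ i, f'.eval (v i) = 0 := by
      intro i
      have hc := congrArg (laurentEval (hv i).unit) hf'
      rw [laurentEval_toLaurent, map_mul] at hc
      have h0 : laurentEval (hv i).unit f = 0 := by rw [← hε]; exact hq i
      rw [h0, zero_mul, IsUnit.unit_spec] at hc
      exact hc
    have hdvd : χ ∣ f' := by
      rw [hχ]; exact prod_dvd_of_eval_eq_zero v hinj f' hroots
    have hdvd2 : Polynomial.toLaurent χ ∣ f * LaurentPolynomial.T n := by
      rw [← hf']; exact map_dvd _ hdvd
    obtain ⟨uT, huT⟩ := LaurentPolynomial.isUnit_T (R := K) (n : ℤ)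
    rw [← huT] at hdvd2
    exact Ideal.mem_span_singleton.mpr ((Units.dvd_mul_right).mp hdvd2)
  let Φ : (LaurentPolynomial K ⧸ I)ˣ →* (Fin r → Kˣ) :=
    Pi.monoidHom fun i => Units.map (ε i).toMonoidHom
  have hΦ : ∀ (y : (LaurentPolynomial K ⧸ I)ˣ) (i : Fin r),
      ((Φ y i : Kˣ) : K) = ε i ↑y := fun y i => rfl
  have hΦinj : Function.Injective Φ := by
    intro y z hyz
    have h1 : ∀ i, ε i (↑y : LaurentPolynomial K ⧸ I) = ε i ↑z := by
      intro i
      rw [← hΦ, ← hΦ, hyz]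
    have h2 : (↑y - ↑z : LaurentPolynomial K ⧸ I) = 0 := by
      apply hεinj
      intro i
      rw [map_sub, h1 i, sub_self]
    exact Units.ext (by linear_combination (norm := module) h2)
  have hΦX : ∀ (x : (LaurentPolynomial K ⧸ I)ˣ),
      (↑x : LaurentPolynomial K ⧸ I) =
        Ideal.Quotient.mk I (Polynomial.toLaurent (X : Polynomial K)) →
      ∀ i, Φ x i = (hv i).unit := by
    intro x hx i
    apply Units.ext
    rw [hΦ, hx, hεT, Polynomial.eval_X, IsUnit.unit_spec]
  constructor
  · rintro ⟨T, u, x, hu, hx, h⟩ i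
    refine ⟨Φ u i, ?_⟩
    have h2 : Φ (u ^ a) = Φ (x ^ b) := by rw [h]
    rw [map_zpow, map_zpow] at h2
    have h3 : (Φ u i) ^ a = (Φ x i) ^ b := by
      have := congrFun h2 i
      simpa using this
    rw [h3, hΦX x hx i]
  · intro hw
    choose w hw using hw
    obtain ⟨T, hT⟩ := exists_interp v hdiff (fun i => ((w i : Kˣ) : K))
    obtain ⟨S, hS⟩ := exists_interp v hdiff (fun i => (((w i)⁻¹ : Kˣ) : K))
    have hTS : (Ideal.Quotient.mk I (Polynomial.toLaurent T)) *
        (Ideal.Quotient.mk I (Polynomial.toLaurent S)) = 1 := by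
      have hdvd : χ ∣ T * S - 1 := by
        rw [hχ]
        apply prod_dvd_of_eval_eq_zero v hinj
        intro i
        simp [hT i, hS i]
      rw [← map_mul, ← map_mul]
      have : Polynomial.toLaurent (T * S) - 1 ∈ I := by
        apply Ideal.mem_span_singleton.mpr
        have := map_dvd (Polynomial.toLaurent (R := K)) hdvd
        simpa using this
      have h1 := Ideal.Quotient.eq_zero_iff_mem.mpr this
      rw [map_sub, map_one, sub_eq_zero] at h1
      exact h1
    refine ⟨T, ⟨Ideal.Quotient.mk I (Polynomial.toLaurent T),
        Ideal.Quotient.mk I (Polynomial.toLaurent S), hTS, by rw [mul_comm]; exact hTS⟩,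
      Units.map (Ideal.Quotient.mk I).toMonoidHom
        (LaurentPolynomial.isUnit_T (R := K) 1).unit, rfl, ?_, ?_⟩
    · show Ideal.Quotient.mk I ((LaurentPolynomial.isUnit_T (R := K) 1).unit : LaurentPolynomial K) = _
      rw [IsUnit.unit_spec, Polynomial.toLaurent_X]
    · apply hΦinj
      rw [map_zpow, map_zpow]
      funext i
      have h1 : Φ ⟨Ideal.Quotient.mk I (Polynomial.toLaurent T),
          Ideal.Quotient.mk I (Polynomial.toLaurent S), hTS, by rw [mul_comm]; exact hTS⟩ i = w i := by
        apply Units.ext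
        rw [hΦ]
        show ε i (Ideal.Quotient.mk I (Polynomial.toLaurent T)) = _
        rw [hεT, hT i]
      have h2 : Φ (Units.map (Ideal.Quotient.mk I).toMonoidHom
          (LaurentPolynomial.isUnit_T (R := K) 1).unit) i = (hv i).unit := by
        apply hΦX
        show Ideal.Quotient.mk I ((LaurentPolynomial.isUnit_T (R := K) 1).unit : LaurentPolynomial K) = _
        rw [IsUnit.unit_spec, Polynomial.toLaurent_X]
      have hpow : ∀ (g : Fin r → Kˣ) (n : ℤ) (j : Fin r), (g ^ n) j = g j ^ n :=
        fun g n j => rfl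
      rw [hpow, hpow, h1, h2, hw i]
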